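/- arXiv:1710.06852 — 2 statements merged into one kernel-verified Lean document; each statement's English description precedes it below -/
import Mathlib

section
/- Let f be absolutely continuous on (a,b), a < b real, 0 < α < 1. Then the Caputo–Fabrizio operator admits the expansion ^{CF}D^α_{a+} f(t) = −(M(α) f(a⁺)/(1−α)) exp(−α(t−a)/(1−α)) + (M(α)/(1−α)) Σ_{k=0}^∞ (−α/(1−α))^k J^k_{a+} f(t), where J^k_{a+} is the k-fold repeated integral (Riemann–Liouville integral of integer order k, with J^0 the identity). In particular, the CF operator is an infinite linear combination of integer-order repeated integrals of f plus an exponential boundary term. -/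
open MeasureTheory
open scoped Nat

lemma expInt (lam t c d : ℝ) (hlam : lam ≠ 0) :
    ∫ τ in c..d, Real.exp (lam * (t - τ)) =
      (Real.exp (lam * (t - c)) - Real.exp (lam * (t - d))) / lam := by
  have hder : ∀ τ : ℝ, HasDerivAt (fun τ => -Real.exp (lam * (t - τ)) / lam)
      (Real.exp (lam * (t - τ))) τ := by
    intro τ
    have h1 : HasDerivAt (fun τ : ℝ => lam * (t - τ)) (-lam) τ := by
      simpa using (((hasDerivAt_id τ).const_sub t).const_mul lam)
    have h2 := (Real.hasDerivAt_exp (lam * (t - τ))).comp τ h1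
    have h3 := (h2.neg).div_const lam
    refine h3.congr_deriv ?_
    field_simp
  rw [intervalIntegral.integral_eq_sub_of_hasDerivAt (fun τ _ => hder τ)
    ((Real.continuous_exp.comp (continuous_const.mul
      (continuous_const.sub continuous_id))).intervalIntegrable c d)]
  field_simp
  ring

lemma hasSum_exp_real (x : ℝ) : HasSum (fun n : ℕ => x ^ n / n !) (Real.exp x) := by
  rw [Real.exp_eq_exp_ℝ]
  exact NormedSpace.expSeries_div_hasSum_exp x

lemma fubini_tri {a t : ℝ} (hat : a < t) {K g : ℝ → ℝ} (hK : Continuous K)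
    (hg : IntegrableOn g (Set.Ioc a t)) :
    (∫ τ in a..t, K τ * (∫ s in a..τ, g s)) =
      ∫ s in a..t, (∫ τ in s..t, K τ) * g s := by
  have hKi : Integrable K (volume.restrict (Set.Ioc a t)) := hK.integrableOn_Ioc
  have hmeas : MeasurableSet {p : ℝ × ℝ | p.2 ≤ p.1} :=
    measurableSet_le measurable_snd measurable_fst
  have hHint : Integrable (Function.uncurry fun τ s =>
      ({p : ℝ × ℝ | p.2 ≤ p.1}.indicator (fun p => K p.1 * g p.2)) (τ, s))
      ((volume.restrict (Set.Ioc a t)).prod (volume.restrict (Set.Ioc a t))) := by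
    have hbig := hKi.mul_prod hg
    have := hbig.indicator hmeas
    exact this.congr (Filter.Eventually.of_forall fun p => by rcases p with ⟨τ, s⟩; rfl)
  have hswap := MeasureTheory.integral_integral_swap hHint
  have hL : (∫ τ, (∫ s, ({p : ℝ × ℝ | p.2 ≤ p.1}.indicator (fun p => K p.1 * g p.2)) (τ, s)
        ∂(volume.restrict (Set.Ioc a t))) ∂(volume.restrict (Set.Ioc a t)))
      = ∫ τ in a..t, K τ * (∫ s in a..τ, g s) := by
    rw [intervalIntegral.integral_of_le hat.le]
    apply setIntegral_congr_fun measurableSet_Ioc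
    intro τ hτ
    have h1 : ∀ s : ℝ, ({p : ℝ × ℝ | p.2 ≤ p.1}.indicator (fun p => K p.1 * g p.2)) (τ, s)
        = (Set.Iic τ).indicator (fun s => K τ * g s) s := by
      intro s
      by_cases h : s ≤ τ <;> simp [Set.indicator_apply, h]
    simp only [h1]
    rw [integral_indicator measurableSet_Iic, Measure.restrict_restrict measurableSet_Iic]
    have h2 : Set.Iic τ ∩ Set.Ioc a t = Set.Ioc a τ := by
      ext x
      simp only [Set.mem_inter_iff, Set.mem_Iic, Set.mem_Ioc]
      exact ⟨fun h => ⟨h.2.1, h.1⟩, fun h => ⟨h.2, h.1, h.2.trans hτ.2⟩⟩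
    rw [h2, integral_const_mul, intervalIntegral.integral_of_le hτ.1.le]
  have hR : (∫ s, (∫ τ, ({p : ℝ × ℝ | p.2 ≤ p.1}.indicator (fun p => K p.1 * g p.2)) (τ, s)
        ∂(volume.restrict (Set.Ioc a t))) ∂(volume.restrict (Set.Ioc a t)))
      = ∫ s in a..t, (∫ τ in s..t, K τ) * g s := by
    rw [intervalIntegral.integral_of_le hat.le]
    apply setIntegral_congr_fun measurableSet_Ioc
    intro s hs
    have h1 : ∀ τ : ℝ, ({p : ℝ × ℝ | p.2 ≤ p.1}.indicator (fun p => K p.1 * g p.2)) (τ, s)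
        = (Set.Ici s).indicator (fun τ => K τ * g s) τ := by
      intro τ
      by_cases h : s ≤ τ <;> simp [Set.indicator_apply, h]
    simp only [h1]
    rw [integral_indicator measurableSet_Ici, Measure.restrict_restrict measurableSet_Ici]
    have h2 : Set.Ici s ∩ Set.Ioc a t = Set.Icc s t := by
      ext x
      simp only [Set.mem_inter_iff, Set.mem_Ici, Set.mem_Ioc, Set.mem_Icc]
      exact ⟨fun h => ⟨h.1, h.2.2⟩, fun h => ⟨h.1, hs.1.trans_le h.1, h.2⟩⟩
    rw [h2, integral_mul_const, integral_Icc_eq_integral_Ioc,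
      ← intervalIntegral.integral_of_le hs.2]
  rw [← hL, ← hR, hswap]


/-- Riemann–Liouville fractional integral, with the convention `J^0_{a+} f = f`. -/
noncomputable def RLr (a σ : ℝ) (f : ℝ → ℝ) (t : ℝ) : ℝ :=
  if σ = 0 then f t
  else (Real.Gamma σ)⁻¹ * ∫ τ in a..t, (t - τ) ^ (σ - 1) * f τ

/-- Caputo–Fabrizio operator. -/
noncomputable def CFop (M α a : ℝ) (f' : ℝ → ℝ) (t : ℝ) : ℝ :=
  (M / (1 - α)) * ∫ τ in a..t, Real.exp (-(α / (1 - α)) * (t - τ)) * f' τ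

/-- Expansion of the CF operator as an exponential boundary term plus an infinite
linear combination of integer-order repeated integrals:
`^{CF}D^α_{a+} f(t) = −(M(α)f(a⁺)/(1−α)) e^{−α(t−a)/(1−α)}
  + (M(α)/(1−α)) Σ_k (−α/(1−α))^k J^k_{a+} f(t)`. -/
theorem CF_eq_tsum_integer_integrals (a b α M fA : ℝ) (f f' : ℝ → ℝ)
    (hab : a < b) (hα : 0 < α) (hα1 : α < 1)
    (hf' : IntervalIntegrable f' volume a b)
    (hf : ∀ t ∈ Set.Ioo a b, f t = fA + ∫ τ in a..t, f' τ) :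
    ∀ t ∈ Set.Ioo a b,
      CFop M α a f' t =
        -(M * fA / (1 - α)) * Real.exp (-(α / (1 - α)) * (t - a)) +
          (M / (1 - α)) * ∑' k : ℕ, (-(α / (1 - α))) ^ k * RLr a (k : ℝ) f t := by
  intro t ht
  obtain ⟨hat, htb⟩ := ht
  have h1α : (0:ℝ) < 1 - α := by linarith
  rw [CFop]
  set lam : ℝ := -(α / (1 - α)) with hlamdef
  have hlampos : 0 < α / (1 - α) := div_pos hα h1α
  have hlam : lam ≠ 0 := by rw [hlamdef]; exact neg_ne_zero.mpr hlampos.ne'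
  -- basic integrabilities
  have hf'' : IntervalIntegrable f' volume a t := by
    apply hf'.mono_set
    rw [Set.uIcc_of_le hat.le, Set.uIcc_of_le hab.le]
    exact Set.Icc_subset_Icc le_rfl htb.le
  have hgInt : IntegrableOn f' (Set.Ioc a t) := by
    have := intervalIntegrable_iff.mp hf''
    rwa [Set.uIoc_of_le hat.le] at this
  set F : ℝ → ℝ := fun u => ∫ s in a..u, f' s with hFdef
  have hFcont : ContinuousOn F (Set.Icc a t) := by
    have : IntegrableOn f' (Set.uIcc a t) := by
      rw [Set.uIcc_of_le hat.le]
      exact (integrableOn_Icc_iff_integrableOn_Ioc).mpr hgInt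
    have h := intervalIntegral.continuousOn_primitive_interval this
    rwa [Set.uIcc_of_le hat.le] at h
  have hfF : ∀ τ ∈ Set.Ioc a t, f τ = fA + F τ := by
    intro τ hτ
    exact hf τ ⟨hτ.1, lt_of_le_of_lt hτ.2 htb⟩
  have hFt : F t = f t - fA := by
    rw [hf t ⟨hat, htb⟩]; ring
  have hfInt : IntegrableOn f (Set.Ioc a t) := by
    have h1 : IntegrableOn (fun τ => fA + F τ) (Set.Ioc a t) := by
      apply ContinuousOn.integrableOn_Icc (continuousOn_const.add hFcont) |>.mono_set
        Set.Ioc_subset_Icc_self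
    exact h1.congr_fun (fun x hx => (hfF x hx).symm) measurableSet_Ioc
  have hfII : IntervalIntegrable f volume a t := by
    rw [intervalIntegrable_iff, Set.uIoc_of_le hat.le]; exact hfInt
  -- the exponential kernel
  have hEcont : Continuous fun τ : ℝ => Real.exp (lam * (t - τ)) :=
    Real.continuous_exp.comp (continuous_const.mul (continuous_const.sub continuous_id))
  have hEf'II : IntervalIntegrable (fun τ => Real.exp (lam * (t - τ)) * f' τ) volume a t :=
    hf''.continuousOn_mul hEcont.continuousOn
  -- STEP 1: the series identity
  have hterm : ∀ k : ℕ, lam ^ (k+1) * RLr a ((k+1 : ℕ) : ℝ) f t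
      = ∫ τ in a..t, lam ^ (k+1) * ((k ! : ℝ))⁻¹ * ((t - τ) ^ k * f τ) := by
    intro k
    rw [RLr, if_neg (by positivity)]
    have hG : Real.Gamma ((k+1 : ℕ) : ℝ) = (k ! : ℝ) := by
      push_cast
      exact Real.Gamma_nat_eq_factorial k
    have hpow : ∀ τ : ℝ, (t - τ) ^ (((k+1 : ℕ) : ℝ) - 1) * f τ = (t - τ) ^ k * f τ := by
      intro τ
      congr 1
      rw [show ((k+1 : ℕ) : ℝ) - 1 = (k : ℝ) by push_cast; ring, Real.rpow_natCast]
    simp only [hpow, hG]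
    rw [intervalIntegral.integral_const_mul]
    ring
  have hshift : HasSum (fun k : ℕ => lam ^ (k+1) * RLr a ((k+1 : ℕ) : ℝ) f t)
      (∫ τ in a..t, (lam * f τ) * Real.exp (lam * (t - τ))) := by
    simp only [hterm]
    apply intervalIntegral.hasSum_integral_of_dominated_convergence
      (bound := fun k τ => (|lam| ^ (k+1) * ((k ! : ℝ))⁻¹ * (t - a) ^ k) * |f τ|)
    · intro k
      have hm : AEStronglyMeasurable f (volume.restrict (Set.uIoc a t)) := by
        rw [Set.uIoc_of_le hat.le]; exact hfInt.aestronglyMeasurable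
      exact (((continuous_const.sub continuous_id).pow k).aestronglyMeasurable.mul hm).const_mul _
    · intro k
      filter_upwards with τ hτ
      rw [Set.uIoc_of_le hat.le] at hτ
      have h1 : |t - τ| ≤ t - a := by
        rw [abs_of_nonneg (by linarith [hτ.2])]
        linarith [hτ.1]
      have h2 : (0:ℝ) ≤ t - a := by linarith [hat]
      calc ‖lam ^ (k+1) * ((k ! : ℝ))⁻¹ * ((t - τ) ^ k * f τ)‖
          = |lam| ^ (k+1) * ((k ! : ℝ))⁻¹ * (|t - τ| ^ k * |f τ|) := by
            rw [Real.norm_eq_abs]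
            rw [abs_mul, abs_mul, abs_mul, abs_pow, abs_pow, abs_inv, Nat.abs_cast]
        _ ≤ |lam| ^ (k+1) * ((k ! : ℝ))⁻¹ * ((t - a) ^ k * |f τ|) := by
            gcongr
        _ = (|lam| ^ (k+1) * ((k ! : ℝ))⁻¹ * (t - a) ^ k) * |f τ| := by ring
    · filter_upwards with τ hτ
      have hs := ((hasSum_exp_real (|lam| * (t - a))).mul_left (|lam| * |f τ|)).summable
      apply hs.congr
      intro k
      rw [mul_pow]
      field_simp
      ring
    · have hc : ∀ τ : ℝ, (∑' k : ℕ, (|lam| ^ (k+1) * ((k ! : ℝ))⁻¹ * (t - a) ^ k) * |f τ|)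
          = (∑' k : ℕ, |lam| ^ (k+1) * ((k ! : ℝ))⁻¹ * (t - a) ^ k) * |f τ| := by
        intro τ
        exact tsum_mul_right
      simp only [hc]
      exact (hfII.abs).const_mul _
    · filter_upwards with τ hτ
      have hs := (hasSum_exp_real (lam * (t - τ))).mul_left (lam * f τ)
      have heq : (fun k : ℕ => (lam * f τ) * ((lam * (t - τ)) ^ k / k !))
          = fun k : ℕ => lam ^ (k+1) * ((k ! : ℝ))⁻¹ * ((t - τ) ^ k * f τ) := by
        funext k
        rw [mul_pow]
        field_simp
        ring
      rwa [heq] at hs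
  have hSfull : HasSum (fun k : ℕ => lam ^ k * RLr a (k : ℝ) f t)
      ((∫ τ in a..t, (lam * f τ) * Real.exp (lam * (t - τ))) + f t) := by
    have h0 : lam ^ 0 * RLr a ((0:ℕ) : ℝ) f t = f t := by
      simp [RLr]
    have := (hasSum_nat_add_iff (f := fun k : ℕ => lam ^ k * RLr a (k : ℝ) f t) 1).mp hshift
    simp only [Finset.range_one, Finset.sum_singleton, pow_zero, one_mul, Nat.cast_zero] at this
    rwa [show RLr a 0 f t = f t from by simp [RLr]] at this
  have hsumval : (∑' k : ℕ, lam ^ k * RLr a (k : ℝ) f t)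
      = (∫ τ in a..t, (lam * f τ) * Real.exp (lam * (t - τ))) + f t := hSfull.tsum_eq
  -- STEP 2: compute ∫ (lam * f τ) * exp (lam (t - τ))
  have hcongr : (∫ τ in a..t, (lam * f τ) * Real.exp (lam * (t - τ)))
      = ∫ τ in a..t, (lam * (fA + F τ)) * Real.exp (lam * (t - τ)) := by
    rw [intervalIntegral.integral_of_le hat.le, intervalIntegral.integral_of_le hat.le]
    apply setIntegral_congr_fun measurableSet_Ioc
    intro τ hτ
    simp only [hfF τ hτ]
  have hEII : IntervalIntegrable (fun τ => Real.exp (lam * (t - τ))) volume a t :=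
    hEcont.intervalIntegrable a t
  have hEFII : IntervalIntegrable (fun τ => Real.exp (lam * (t - τ)) * F τ) volume a t := by
    apply ContinuousOn.intervalIntegrable
    rw [Set.uIcc_of_le hat.le]
    exact hEcont.continuousOn.mul hFcont
  have hsplit : (∫ τ in a..t, (lam * (fA + F τ)) * Real.exp (lam * (t - τ)))
      = lam * fA * (∫ τ in a..t, Real.exp (lam * (t - τ)))
        + lam * (∫ τ in a..t, Real.exp (lam * (t - τ)) * F τ) := by
    rw [← intervalIntegral.integral_const_mul, ← intervalIntegral.integral_const_mul,
      ← intervalIntegral.integral_add (hEII.const_mul _) (hEFII.const_mul _)]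
    apply intervalIntegral.integral_congr
    intro τ _
    dsimp only
    ring
  have hEa : (∫ τ in a..t, Real.exp (lam * (t - τ)))
      = (Real.exp (lam * (t - a)) - 1) / lam := by
    rw [expInt lam t a t hlam]
    simp
  have hfub : (∫ τ in a..t, Real.exp (lam * (t - τ)) * F τ)
      = ∫ s in a..t, (∫ τ in s..t, Real.exp (lam * (t - τ))) * f' s :=
    fubini_tri hat hEcont hgInt
  have hker : (∫ s in a..t, (∫ τ in s..t, Real.exp (lam * (t - τ))) * f' s)
      = ∫ s in a..t, ((Real.exp (lam * (t - s)) - 1) / lam) * f' s := by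
    apply intervalIntegral.integral_congr
    intro s _
    dsimp only
    rw [expInt lam t s t hlam]
    simp
  have hker2 : (∫ s in a..t, ((Real.exp (lam * (t - s)) - 1) / lam) * f' s)
      = lam⁻¹ * (∫ s in a..t, Real.exp (lam * (t - s)) * f' s) - lam⁻¹ * F t := by
    have : (∫ s in a..t, ((Real.exp (lam * (t - s)) - 1) / lam) * f' s)
        = ∫ s in a..t, (lam⁻¹ * (Real.exp (lam * (t - s)) * f' s) - lam⁻¹ * f' s) := by
      apply intervalIntegral.integral_congr
      intro s _
      dsimp only
      field_simp
    rw [this, intervalIntegral.integral_sub (hEf'II.const_mul _) (hf''.const_mul _),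
      intervalIntegral.integral_const_mul, intervalIntegral.integral_const_mul]
  -- assemble
  rw [hsumval, hcongr, hsplit, hEa, hfub, hker, hker2, hFt]
  field_simp
  ring
end

section
/- Let f be absolutely continuous on (a,b), a < b real, 0 < α < 1. Then the ABC operator admits the expansion ^{ABC}D^α_{a+} f(t) = −(B(α) f(a⁺)/(1−α)) E_α(−α(t−a)^α/(1−α)) + (B(α)/(1−α)) Σ_{k=0}^∞ (−α/(1−α))^k J^{αk}_{a+} f(t), where J^{αk}_{a+} is the Riemann–Liouville integral of order αk (with J^0 the identity). -/
open MeasureTheory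

/-- Real one-parameter Mittag-Leffler function `E_α(z) = Σ_k z^k/Γ(αk+1)`. -/
noncomputable def mlR (α z : ℝ) : ℝ := ∑' k : ℕ, z ^ k / Real.Gamma (α * k + 1)

/-- Atangana–Baleanu operator in the Caputo sense. -/
noncomputable def ABCop (B α a : ℝ) (f' : ℝ → ℝ) (t : ℝ) : ℝ :=
  (B / (1 - α)) * ∫ τ in a..t, mlR α (-(α / (1 - α)) * (t - τ) ^ α) * f' τ

/- ### Auxiliary lemmas -/

lemma rpow_mul_natpow {x : ℝ} (hx : 0 ≤ x) (α : ℝ) (k : ℕ) :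
    x ^ (α * k) = (x ^ α) ^ k := by
  rw [Real.rpow_mul hx, Real.rpow_natCast]

lemma summable_ml_nonneg {α : ℝ} (hα : 0 < α) {x : ℝ} (hx : 0 ≤ x) :
    Summable (fun k : ℕ => x ^ k / Real.Gamma (α * k + 1)) := by
  set M : ℝ := max 1 x with hM
  have hM1 : (1:ℝ) ≤ M := le_max_left 1 x
  have hM0 : (0:ℝ) < M := lt_of_lt_of_le one_pos hM1
  set y : ℝ := M ^ (1/α) with hy
  have hy1 : (1:ℝ) ≤ y := by
    rw [hy]
    calc (1:ℝ) = M ^ (0:ℝ) := (Real.rpow_zero M).symm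
      _ ≤ M ^ (1/α) := Real.rpow_le_rpow_of_exponent_le hM1 (by positivity)
  have hy0 : 0 < y := lt_of_lt_of_le one_pos hy1
  obtain ⟨C, hC⟩ : ∃ C : ℝ, ∀ n : ℕ, (2*y) ^ n / (n.factorial : ℝ) ≤ C := by
    obtain ⟨C, hC⟩ := (FloorSemiring.tendsto_pow_div_factorial_atTop (2*y)).bddAbove_range
    exact ⟨C, fun n => hC (Set.mem_range_self n)⟩
  set r : ℝ := (2:ℝ)⁻¹ ^ α with hr
  have hr0 : 0 < r := Real.rpow_pos_of_pos (by norm_num) α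
  have hr1 : r < 1 := by
    have : (2:ℝ)⁻¹ ^ α < (2:ℝ)⁻¹ ^ (0:ℝ) := by
      apply Real.rpow_lt_rpow_of_exponent_gt (by norm_num) (by norm_num) hα
    simpa [Real.rpow_zero] using this
  -- key pointwise bound for k with 1 ≤ α k
  have key : ∀ k : ℕ, 1 ≤ α * k → x ^ k / Real.Gamma (α * k + 1) ≤ (2*y*C) * r ^ k := by
    intro k hk
    have hαk0 : (0:ℝ) ≤ α * k := by positivity
    set n : ℕ := ⌊α * (k:ℝ)⌋₊ with hn
    have h1 : (n:ℝ) ≤ α * k := Nat.floor_le hαk0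
    have h2 : α * k < n + 1 := Nat.lt_floor_add_one _
    have hn1 : 1 ≤ n := Nat.le_floor (by exact_mod_cast hk)
    have hn1' : (1:ℝ) ≤ (n:ℝ) := by exact_mod_cast hn1
    have hΓ : (n.factorial : ℝ) ≤ Real.Gamma (α * k + 1) := by
      rw [← Real.Gamma_nat_eq_factorial]
      apply Real.Gamma_strictMonoOn_Ici.monotoneOn
      · simp only [Set.mem_Ici]; linarith
      · simp only [Set.mem_Ici]; linarith
      · linarith
    have hfac0 : (0:ℝ) < (n.factorial : ℝ) := by exact_mod_cast n.factorial_pos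
    have hΓ0 : (0:ℝ) < Real.Gamma (α * k + 1) := lt_of_lt_of_le hfac0 hΓ
    have hxk : x ^ k ≤ y * y ^ n := by
      have e1 : x ^ k ≤ M ^ k := pow_le_pow_left₀ hx (le_max_right 1 x) k
      have e2 : (M:ℝ) ^ k = y ^ (α * k) := by
        rw [hy, ← Real.rpow_natCast M k, ← Real.rpow_mul hM0.le]
        congr 1
        field_simp
      have e3 : y ^ (α * k) ≤ y ^ ((n:ℝ) + 1) :=
        Real.rpow_le_rpow_of_exponent_le hy1 (by linarith)
      have e4 : y ^ ((n:ℝ) + 1) = y * y ^ n := by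
        rw [show ((n:ℝ) + 1) = ((n+1 : ℕ) : ℝ) by push_cast; ring, Real.rpow_natCast]
        ring
      calc x ^ k ≤ M ^ k := e1
        _ = y ^ (α * k) := e2
        _ ≤ y ^ ((n:ℝ) + 1) := e3
        _ = y * y ^ n := e4
    have hyn : y ^ n / (n.factorial : ℝ) ≤ C / 2 ^ n := by
      have h' := hC n
      rw [mul_pow] at h'
      have h2n : (0:ℝ) < 2 ^ n := by positivity
      rw [div_le_div_iff₀ hfac0 h2n]
      calc y ^ n * 2 ^ n = (2 ^ n * y ^ n / (n.factorial:ℝ)) * (n.factorial:ℝ) := by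
            field_simp
        _ ≤ C * (n.factorial : ℝ) := by
            apply mul_le_mul_of_nonneg_right h' hfac0.le
    have h2nr : ((2:ℝ) ^ n)⁻¹ ≤ 2 * r ^ k := by
      have hrk : r ^ k = ((2:ℝ) ^ (α * k))⁻¹ := by
        rw [hr, ← Real.rpow_natCast _ k, ← Real.rpow_mul (by norm_num : (0:ℝ) ≤ 2⁻¹),
          Real.inv_rpow (by norm_num : (0:ℝ) ≤ 2)]
      have h2ak : (2:ℝ) ^ (α * k) ≤ 2 ^ ((n:ℝ) + 1) :=
        Real.rpow_le_rpow_of_exponent_le (by norm_num) (by linarith)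
      have hpos1 : (0:ℝ) < (2:ℝ) ^ (α * k) := Real.rpow_pos_of_pos (by norm_num) _
      have e : (2:ℝ) ^ ((n:ℝ) + 1) = 2 * 2 ^ n := by
        rw [show ((n:ℝ) + 1) = ((n+1 : ℕ) : ℝ) by push_cast; ring, Real.rpow_natCast]
        ring
      rw [e] at h2ak
      have goal' : (1:ℝ)/2^n ≤ 2/((2:ℝ)^(α*(k:ℝ))) := by
        rw [div_le_div_iff₀ (by positivity) hpos1]
        linarith
      rw [hrk]
      calc ((2:ℝ)^n)⁻¹ = 1/2^n := (one_div _).symm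
        _ ≤ 2/((2:ℝ)^(α*(k:ℝ))) := goal'
        _ = 2 * ((2:ℝ)^(α*(k:ℝ)))⁻¹ := by rw [div_eq_mul_inv]
    calc x ^ k / Real.Gamma (α * k + 1) ≤ x ^ k / (n.factorial : ℝ) := by
          apply div_le_div_of_nonneg_left (by positivity) hfac0 hΓ
      _ ≤ (y * y ^ n) / (n.factorial : ℝ) := by
          exact div_le_div_of_nonneg_right hxk hfac0.le -- placeholder2
      _ = y * (y ^ n / (n.factorial : ℝ)) := by ring
      _ ≤ y * (C / 2 ^ n) := by
          apply mul_le_mul_of_nonneg_left hyn hy0.le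
      _ = y * C * ((2:ℝ) ^ n)⁻¹ := by ring
      _ ≤ y * C * (2 * r ^ k) := by
          apply mul_le_mul_of_nonneg_left h2nr
          have hC0 : 0 ≤ C := le_trans (by positivity : (0:ℝ) ≤ (2*y)^0 / (0:ℕ).factorial) (hC 0)
          positivity
      _ = (2*y*C) * r ^ k := by ring
  -- conclude summability
  set k0 : ℕ := ⌈1/α⌉₊ with hk0
  rw [← summable_nat_add_iff k0]
  have hsum : Summable (fun n : ℕ => ((2*y*C) * r ^ k0) * r ^ n) :=
    (summable_geometric_of_lt_one hr0.le hr1).mul_left _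
  apply Summable.of_nonneg_of_le (fun n => ?_) (fun n => ?_) hsum
  · have hΓ0 : (0:ℝ) < Real.Gamma (α * (n + k0 : ℕ) + 1) := by
      apply Real.Gamma_pos_of_pos; positivity
    positivity
  · have h1 : (1:ℝ) ≤ α * (n + k0 : ℕ) := by
      have h2 : (1/α : ℝ) ≤ k0 := Nat.le_ceil _
      have h3 : (k0:ℝ) ≤ (n + k0 : ℕ) := by push_cast; linarith [Nat.cast_nonneg (α := ℝ) n]
      calc (1:ℝ) = α * (1/α) := by field_simp
        _ ≤ α * (n + k0 : ℕ) := by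
            apply mul_le_mul_of_nonneg_left (le_trans h2 h3) hα.le
    calc x ^ (n + k0) / Real.Gamma (α * (n + k0 : ℕ) + 1) ≤ (2*y*C) * r ^ (n + k0) :=
          key _ h1
      _ = ((2*y*C) * r ^ k0) * r ^ n := by rw [pow_add]; ring


lemma summable_ml' {α : ℝ} (hα : 0 < α) (z : ℝ) :
    Summable (fun k : ℕ => z ^ k / Real.Gamma (α * k + 1)) := by
  apply Summable.of_abs
  refine (summable_ml_nonneg hα (abs_nonneg z)).congr fun k => ?_
  rw [abs_div, abs_pow, abs_of_pos (Real.Gamma_pos_of_pos (by positivity))]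

lemma intInt_rpow_sub (a t : ℝ) {r : ℝ} (hr : -1 < r) :
    IntervalIntegrable (fun τ => (t - τ) ^ r) volume a t := by
  have h := (intervalIntegral.intervalIntegrable_rpow' (a := 0) (b := t - a) hr).comp_sub_left t
  simpa using h.symm

lemma integral_rpow_sub {σ : ℝ} (hσ : 0 < σ) (s t : ℝ) :
    ∫ τ in s..t, (t - τ) ^ (σ - 1) = (t - s) ^ σ / σ := by
  rw [intervalIntegral.integral_comp_sub_left (fun x => x ^ (σ - 1)) t, sub_self,
    integral_rpow (Or.inl (by linarith)), sub_add_cancel,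
    Real.zero_rpow hσ.ne', sub_zero]

lemma core_fubini {σ a t : ℝ} (hσ : 0 < σ) (hat : a < t) {g : ℝ → ℝ}
    (hg : IntegrableOn g (Set.Ioc a t)) :
    ∫ τ in Set.Ioc a t, (t - τ) ^ (σ - 1) * (∫ s in Set.Ioc a τ, g s)
      = σ⁻¹ * ∫ s in Set.Ioc a t, (t - s) ^ σ * g s := by
  set μ : Measure ℝ := volume.restrict (Set.Ioc a t) with hμ
  set Φ : ℝ → ℝ → ℝ := fun τ s => if s ≤ τ then (t - τ) ^ (σ - 1) * g s else 0 with hΦ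
  have hrint : IntegrableOn (fun τ => (t - τ) ^ (σ - 1)) (Set.Ioc a t) :=
    (intervalIntegrable_iff_integrableOn_Ioc_of_le hat.le).mp
      (intInt_rpow_sub a t (by linarith))
  have hmeas : AEStronglyMeasurable (Function.uncurry Φ) (μ.prod μ) := by
    have h1 : AEStronglyMeasurable (fun p : ℝ × ℝ => (t - p.1) ^ (σ - 1) * g p.2) (μ.prod μ) :=
      (hrint.aestronglyMeasurable.comp_fst).mul (hg.aestronglyMeasurable.comp_snd)
    have huncurry : Function.uncurry Φ = Set.indicator {p : ℝ × ℝ | p.2 ≤ p.1}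
        (fun p => (t - p.1) ^ (σ - 1) * g p.2) := by
      ext p
      simp only [Function.uncurry, hΦ, Set.indicator_apply, Set.mem_setOf_eq]
    rw [huncurry]
    exact h1.indicator (measurableSet_le measurable_snd measurable_fst)
  have hprod_ae : ∀ᵐ p : ℝ × ℝ ∂(μ.prod μ), p.1 ∈ Set.Ioc a t := by
    rw [hμ, Measure.prod_restrict]
    filter_upwards [ae_restrict_mem (measurableSet_Ioc.prod measurableSet_Ioc)] with p hp
    exact hp.1
  have hbound_int : Integrable (fun p : ℝ × ℝ => (t - p.1) ^ (σ - 1) * |g p.2|) (μ.prod μ) :=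
    hrint.mul_prod hg.abs
  have hΦint : Integrable (Function.uncurry Φ) (μ.prod μ) := by
    apply Integrable.mono' hbound_int hmeas
    filter_upwards [hprod_ae] with p hp
    have ht1 : (0:ℝ) ≤ t - p.1 := sub_nonneg.mpr hp.2
    by_cases h : p.2 ≤ p.1
    · simp only [Function.uncurry, hΦ, if_pos h]
      rw [Real.norm_eq_abs, abs_mul, abs_of_nonneg (Real.rpow_nonneg ht1 _)]
    · simp only [Function.uncurry, hΦ, if_neg h, norm_zero]
      positivity
  have step1 : (∫ τ in Set.Ioc a t, (t - τ) ^ (σ - 1) * (∫ s in Set.Ioc a τ, g s))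
      = ∫ τ, ∫ s, Φ τ s ∂μ ∂μ := by
    apply setIntegral_congr_fun measurableSet_Ioc
    intro τ hτ
    dsimp only
    have h1 : (∫ s, Φ τ s ∂μ)
        = ∫ s in Set.Ioc a t, (Set.Iic τ).indicator (fun s => (t - τ) ^ (σ - 1) * g s) s := by
      apply setIntegral_congr_fun measurableSet_Ioc
      intro s _
      simp only [hΦ, Set.indicator_apply, Set.mem_Iic]
    have hseteq : Set.Ioc a t ∩ Set.Iic τ = Set.Ioc a τ := by
      ext s
      simp only [Set.mem_inter_iff, Set.mem_Iic, Set.mem_Ioc]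
      exact ⟨fun ⟨⟨h1, _⟩, h2⟩ => ⟨h1, h2⟩, fun ⟨h1, h2⟩ => ⟨⟨h1, le_trans h2 hτ.2⟩, h2⟩⟩
    rw [h1, setIntegral_indicator measurableSet_Iic, hseteq, integral_const_mul]
  have swap : (∫ τ, ∫ s, Φ τ s ∂μ ∂μ) = ∫ s, ∫ τ, Φ τ s ∂μ ∂μ :=
    integral_integral_swap hΦint
  have step2 : (∫ s, ∫ τ, Φ τ s ∂μ ∂μ)
      = ∫ s in Set.Ioc a t, (t - s) ^ σ / σ * g s := by
    apply setIntegral_congr_fun measurableSet_Ioc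
    intro s hs
    dsimp only
    have h1 : (∫ τ, Φ τ s ∂μ)
        = ∫ τ in Set.Ioc a t, (Set.Ici s).indicator (fun τ => (t - τ) ^ (σ - 1) * g s) τ := by
      apply setIntegral_congr_fun measurableSet_Ioc
      intro τ _
      simp only [hΦ, Set.indicator_apply, Set.mem_Ici]
    have hseteq : Set.Ioc a t ∩ Set.Ici s = Set.Icc s t := by
      ext τ
      simp only [Set.mem_inter_iff, Set.mem_Ici, Set.mem_Ioc, Set.mem_Icc]
      exact ⟨fun ⟨⟨_, h3⟩, h1⟩ => ⟨h1, h3⟩, fun ⟨h1, h2⟩ => ⟨⟨lt_of_lt_of_le hs.1 h1, h2⟩, h1⟩⟩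
    rw [h1, setIntegral_indicator measurableSet_Ici, hseteq, integral_Icc_eq_integral_Ioc,
      ← intervalIntegral.integral_of_le hs.2, intervalIntegral.integral_mul_const,
      integral_rpow_sub hσ]
  rw [step1, swap, step2, ← integral_const_mul]
  apply setIntegral_congr_fun measurableSet_Ioc
  intro s _
  dsimp only
  rw [div_eq_mul_inv]
  ring

/-- Expansion of the ABC operator:
`^{ABC}D^α_{a+} f(t) = −(B(α)f(a⁺)/(1−α)) E_α(−α(t−a)^α/(1−α))
  + (B(α)/(1−α)) Σ_k (−α/(1−α))^k J^{αk}_{a+} f(t)`. -/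
theorem ABC_eq_tsum_RL (a b α B fA : ℝ) (f f' : ℝ → ℝ)
    (hab : a < b) (hα : 0 < α) (hα1 : α < 1)
    (hf' : IntervalIntegrable f' volume a b)
    (hf : ∀ t ∈ Set.Ioo a b, f t = fA + ∫ τ in a..t, f' τ) :
    ∀ t ∈ Set.Ioo a b,
      ABCop B α a f' t =
        -(B * fA / (1 - α)) * mlR α (-(α / (1 - α)) * (t - a) ^ α) +
          (B / (1 - α)) * ∑' k : ℕ, (-(α / (1 - α))) ^ k * RLr a (α * k) f t := by
  intro t ht
  obtain ⟨hat, htb⟩ := ht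
  have h1α : (0:ℝ) < 1 - α := by linarith
  set c : ℝ := -(α / (1 - α)) with hc
  have hta : (0:ℝ) < t - a := by linarith
  have hsub : Set.Ioc a t ⊆ Set.Ioo a b := fun τ hτ => ⟨hτ.1, lt_of_le_of_lt hτ.2 htb⟩
  have hf'at : IntervalIntegrable f' volume a t := by
    apply hf'.mono_set
    rw [Set.uIcc_of_le hat.le, Set.uIcc_of_le hab.le]
    exact Set.Icc_subset_Icc le_rfl htb.le
  have hf'int : IntegrableOn f' (Set.Ioc a t) :=
    (intervalIntegrable_iff_integrableOn_Ioc_of_le hat.le).mp hf'at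
  set F : ℕ → ℝ → ℝ :=
    fun k τ => (c ^ k * (t - τ) ^ (α * k) / Real.Gamma (α * k + 1)) * f' τ with hF
  have hΓpos : ∀ k : ℕ, (0:ℝ) < Real.Gamma (α * k + 1) := fun k =>
    Real.Gamma_pos_of_pos (by positivity)
  set Ck : ℕ → ℝ := fun k => |c| ^ k * (t - a) ^ (α * k) / Real.Gamma (α * k + 1) with hCk
  set I : ℝ := ∫ τ in Set.Ioc a t, ‖f' τ‖ with hI
  have hmeasF : ∀ k, AEStronglyMeasurable (F k) (volume.restrict (Set.Ioc a t)) := by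
    intro k
    apply AEStronglyMeasurable.mul _ hf'int.aestronglyMeasurable
    apply Continuous.aestronglyMeasurable
    have hcont : Continuous fun τ : ℝ => (t - τ) ^ (α * k) :=
      (continuous_const.sub continuous_id).rpow_const (fun τ => Or.inr (by positivity))
    exact (continuous_const.mul hcont).div_const _
  have hbdd : ∀ k, ∀ᵐ τ ∂(volume.restrict (Set.Ioc a t)), ‖F k τ‖ ≤ Ck k * ‖f' τ‖ := by
    intro k
    filter_upwards [ae_restrict_mem measurableSet_Ioc] with τ hτ
    have h0 : (0:ℝ) ≤ t - τ := sub_nonneg.mpr hτ.2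
    have h1 : (t - τ) ^ (α * k) ≤ (t - a) ^ (α * k) :=
      Real.rpow_le_rpow h0 (by linarith [hτ.1]) (by positivity)
    have hxabs : |c ^ k * (t - τ) ^ (α * k) / Real.Gamma (α * k + 1)| ≤ Ck k := by
      rw [abs_div, abs_of_pos (hΓpos k), abs_mul, abs_pow,
        abs_of_nonneg (Real.rpow_nonneg h0 _), hCk]
      dsimp only
      gcongr
    rw [hF]
    dsimp only
    rw [norm_mul, Real.norm_eq_abs]
    exact mul_le_mul_of_nonneg_right hxabs (norm_nonneg _)
  have hFint : ∀ k, IntegrableOn (F k) (Set.Ioc a t) := fun k =>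
    Integrable.mono' (hf'int.norm.const_mul (Ck k)) (hmeasF k) (hbdd k)
  have hInorm : ∀ k, (∫ τ in Set.Ioc a t, ‖F k τ‖) ≤ Ck k * I := by
    intro k
    calc (∫ τ in Set.Ioc a t, ‖F k τ‖) ≤ ∫ τ in Set.Ioc a t, Ck k * ‖f' τ‖ :=
        integral_mono_ae (hFint k).norm (hf'int.norm.const_mul (Ck k)) (hbdd k)
      _ = Ck k * I := by rw [integral_const_mul]
  have hCksum : Summable (fun k => Ck k * I) := by
    have h := (summable_ml_nonneg hα
      (x := |c| * (t - a) ^ α) (by positivity)).mul_right I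
    apply h.congr
    intro k
    rw [hCk]
    dsimp only
    rw [mul_pow, rpow_mul_natpow hta.le]
  have hsumnorm : Summable (fun k => ∫ τ in Set.Ioc a t, ‖F k τ‖) :=
    Summable.of_nonneg_of_le (fun k => integral_nonneg (fun τ => norm_nonneg _)) hInorm hCksum
  have hswap : ∑' k, (∫ τ in Set.Ioc a t, F k τ) = ∫ τ in Set.Ioc a t, ∑' k, F k τ :=
    integral_tsum_of_summable_integral_norm (fun k => hFint k) hsumnorm
  have hcongr : (∫ τ in Set.Ioc a t, ∑' k, F k τ)
      = ∫ τ in Set.Ioc a t, mlR α (c * (t - τ) ^ α) * f' τ := by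
    apply setIntegral_congr_fun measurableSet_Ioc
    intro τ hτ
    dsimp only
    have h0 : (0:ℝ) ≤ t - τ := sub_nonneg.mpr hτ.2
    calc (∑' k, F k τ)
        = ∑' k : ℕ, ((c * (t - τ) ^ α) ^ k / Real.Gamma (α * k + 1)) * f' τ := by
          apply tsum_congr
          intro k
          rw [hF]
          dsimp only
          rw [mul_pow, ← rpow_mul_natpow h0]
      _ = mlR α (c * (t - τ) ^ α) * f' τ := by rw [mlR, tsum_mul_right]
  -- per term evaluation
  have hper : ∀ k : ℕ, (∫ τ in Set.Ioc a t, F k τ)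
      = c ^ k * RLr a (α * k) f t - fA * (c * (t - a) ^ α) ^ k / Real.Gamma (α * k + 1) := by
    intro k
    rcases Nat.eq_zero_or_pos k with hk0 | hkpos
    · subst hk0
      have hF0 : ∀ τ, F 0 τ = f' τ := by
        intro τ
        rw [hF]
        simp [Real.Gamma_one]
      have h1 : (∫ τ in Set.Ioc a t, F 0 τ) = f t - fA := by
        simp only [hF0]
        rw [← intervalIntegral.integral_of_le hat.le]
        have := hf t ⟨hat, htb⟩
        linarith
      rw [h1]
      norm_num [RLr, Real.Gamma_one]
    · have hkR : (0:ℝ) < (k:ℝ) := by exact_mod_cast hkpos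
      have hσ : 0 < α * (k:ℝ) := by positivity
      set σ : ℝ := α * (k:ℝ) with hσdef
      have hΓσ : (0:ℝ) < Real.Gamma σ := Real.Gamma_pos_of_pos hσ
      have hrint : IntegrableOn (fun τ => (t - τ) ^ (σ - 1)) (Set.Ioc a t) :=
        (intervalIntegrable_iff_integrableOn_Ioc_of_le hat.le).mp
          (intInt_rpow_sub a t (by linarith))
      have hpull : (∫ τ in Set.Ioc a t, F k τ)
          = (c ^ k / Real.Gamma (σ + 1)) * ∫ τ in Set.Ioc a t, (t - τ) ^ σ * f' τ := by
        rw [← integral_const_mul]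
        apply setIntegral_congr_fun measurableSet_Ioc
        intro τ _
        rw [hF]
        dsimp only
        ring
      have hfval : ∀ τ ∈ Set.Ioc a t, f τ = fA + ∫ s in Set.Ioc a τ, f' s := by
        intro τ hτ
        rw [hf τ (hsub hτ), intervalIntegral.integral_of_le hτ.1.le]
      have hprim_cont : ContinuousOn (fun τ => ∫ s in Set.Ioc a τ, f' s) (Set.Icc a t) :=
        intervalIntegral.continuousOn_primitive
          ((integrableOn_Icc_iff_integrableOn_Ioc).mpr hf'int)
      have hprim_bdd : ∀ τ ∈ Set.Ioc a t, ‖∫ s in Set.Ioc a τ, f' s‖ ≤ I := by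
        intro τ hτ
        calc ‖∫ s in Set.Ioc a τ, f' s‖ ≤ ∫ s in Set.Ioc a τ, ‖f' s‖ :=
            norm_integral_le_integral_norm _
          _ ≤ I := by
              rw [hI]
              apply setIntegral_mono_set hf'int.norm
              · filter_upwards with s using norm_nonneg _
              · filter_upwards with s hs using Set.Ioc_subset_Ioc le_rfl hτ.2 hs
      have i1 : IntegrableOn (fun τ => (t - τ) ^ (σ - 1) * fA) (Set.Ioc a t) :=
        hrint.mul_const fA
      have i2 : IntegrableOn (fun τ => (t - τ) ^ (σ - 1) * (∫ s in Set.Ioc a τ, f' s))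
          (Set.Ioc a t) := by
        apply Integrable.mono' (hrint.norm.mul_const I)
        · exact hrint.aestronglyMeasurable.mul
            ((hprim_cont.mono Set.Ioc_subset_Icc_self).aestronglyMeasurable measurableSet_Ioc)
        · filter_upwards [ae_restrict_mem measurableSet_Ioc] with τ hτ
          rw [norm_mul]
          exact mul_le_mul_of_nonneg_left (hprim_bdd τ hτ) (norm_nonneg _)
      have hfub : (∫ τ in Set.Ioc a t, (t - τ) ^ (σ - 1) * (∫ s in Set.Ioc a τ, f' s))
          = σ⁻¹ * ∫ s in Set.Ioc a t, (t - s) ^ σ * f' s := core_fubini hσ hat hf'int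
      have hrpowint : (∫ τ in Set.Ioc a t, (t - τ) ^ (σ - 1)) = (t - a) ^ σ / σ := by
        rw [← intervalIntegral.integral_of_le hat.le, integral_rpow_sub hσ]
      have hsplit : (∫ τ in Set.Ioc a t, (t - τ) ^ (σ - 1) * f τ)
          = fA * ((t - a) ^ σ / σ) + σ⁻¹ * ∫ s in Set.Ioc a t, (t - s) ^ σ * f' s := by
        calc (∫ τ in Set.Ioc a t, (t - τ) ^ (σ - 1) * f τ)
            = ∫ τ in Set.Ioc a t, ((t - τ) ^ (σ - 1) * fA
                + (t - τ) ^ (σ - 1) * (∫ s in Set.Ioc a τ, f' s)) := by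
              apply setIntegral_congr_fun measurableSet_Ioc
              intro τ hτ
              dsimp only
              rw [hfval τ hτ]
              ring
          _ = (∫ τ in Set.Ioc a t, (t - τ) ^ (σ - 1) * fA)
                + ∫ τ in Set.Ioc a t, (t - τ) ^ (σ - 1) * (∫ s in Set.Ioc a τ, f' s) :=
              integral_add i1 i2
          _ = fA * ((t - a) ^ σ / σ) + σ⁻¹ * ∫ s in Set.Ioc a t, (t - s) ^ σ * f' s := by
              rw [hfub, integral_mul_const, hrpowint]
              ring_nf
      have hRLr : RLr a σ f t
          = (Real.Gamma σ)⁻¹ * (fA * ((t - a) ^ σ / σ)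
              + σ⁻¹ * ∫ s in Set.Ioc a t, (t - s) ^ σ * f' s) := by
        rw [RLr, if_neg hσ.ne', intervalIntegral.integral_of_le hat.le, hsplit]
      rw [hpull, hRLr]
      have hmp : (c * (t - a) ^ α) ^ k = c ^ k * (t - a) ^ σ := by
        rw [mul_pow, rpow_mul_natpow hta.le]
      rw [hmp, Real.Gamma_add_one hσ.ne']
      field_simp
      ring
  -- assemble
  have hsum_int : Summable (fun k => ∫ τ in Set.Ioc a t, F k τ) := by
    apply Summable.of_norm_bounded hsumnorm
    intro k
    exact norm_integral_le_integral_norm _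
  have hsummand2 : Summable (fun k : ℕ => fA * (c * (t - a) ^ α) ^ k
      / Real.Gamma (α * k + 1)) := by
    have h := (summable_ml' hα (c * (t - a) ^ α)).mul_left fA
    apply h.congr
    intro k
    ring
  have hsummand1 : Summable (fun k : ℕ => c ^ k * RLr a (α * k) f t) := by
    apply Summable.congr (hsum_int.add hsummand2)
    intro k
    rw [hper k]
    ring
  have htsum : (∑' k, ∫ τ in Set.Ioc a t, F k τ)
      = (∑' k : ℕ, c ^ k * RLr a (α * k) f t) - fA * mlR α (c * (t - a) ^ α) := by
    have h2 : (∑' k : ℕ, fA * (c * (t - a) ^ α) ^ k / Real.Gamma (α * k + 1))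
        = fA * mlR α (c * (t - a) ^ α) := by
      rw [mlR, ← tsum_mul_left]
      apply tsum_congr
      intro k
      ring
    rw [← h2, ← Summable.tsum_sub hsummand1 hsummand2]
    apply tsum_congr
    intro k
    rw [hper k]
  simp only [ABCop]
  rw [← hc, intervalIntegral.integral_of_le hat.le, ← hcongr, ← hswap, htsum]
  ring
end
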